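/- For fixed μ, ν ∈ P₂(ℝ^d), the sequence k ↦ S_k²(μ,ν) is nondecreasing and concave in k, i.e. S_{k+2}² − S_{k+1}² ≤ S_{k+1}² − S_k² for all k ∈ {1,…,d−2}. -/

import Mathlib

noncomputable section
open MeasureTheory Matrix

abbrev Ed (d : ℕ) := EuclideanSpace ℝ (Fin d)

def couplings {d : ℕ} (μ ν : Measure (Ed d)) : Set (Measure (Ed d × Ed d)) :=
  {π | IsProbabilityMeasure π ∧ π.map Prod.fst = μ ∧ π.map Prod.snd = ν}

def transportCost {d : ℕ} (π : Measure (Ed d × Ed d)) : ℝ :=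
  ∫ p, ‖p.1 - p.2‖ ^ 2 ∂π

/-- Squared 2-Wasserstein distance. -/
def W2sq {d : ℕ} (μ ν : Measure (Ed d)) : ℝ :=
  sInf (transportCost '' couplings μ ν)

/-- Second-order displacement matrix `V_π = ∫ (x−y)(x−y)ᵀ dπ`, entrywise. -/
def Vpi {d : ℕ} (π : Measure (Ed d × Ed d)) : Matrix (Fin d) (Fin d) ℝ :=
  Matrix.of fun i j => ∫ p, (p.1 i - p.2 i) * (p.1 j - p.2 j) ∂π

lemma Vpi_isHermitian {d : ℕ} (π : Measure (Ed d × Ed d)) : (Vpi π).IsHermitian := by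
  unfold Matrix.IsHermitian
  ext i j
  simp [Vpi, Matrix.conjTranspose_apply, mul_comm]

/-- Eigenvalues in decreasing order: `eigDesc V h i` is the `(i+1)`-th largest eigenvalue. -/
def eigDesc {d : ℕ} (V : Matrix (Fin d) (Fin d) ℝ) (h : V.IsHermitian) : Fin d → ℝ :=
  fun i => h.eigenvalues (Tuple.sort h.eigenvalues i.rev)

/-- Sum of the `k` largest eigenvalues. -/
def topEigSum {d : ℕ} (k : ℕ) (V : Matrix (Fin d) (Fin d) ℝ) (h : V.IsHermitian) : ℝ :=
  ∑ i ∈ Finset.univ.filter (fun i : Fin d => (i : ℕ) < k), eigDesc V h i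

/-- Squared subspace robust Wasserstein distance:
`S_k²(μ,ν) = inf_{π ∈ Π(μ,ν)} Σ_{l=1}^k λ_l(V_π)`. -/
def SRWsq {d : ℕ} (k : ℕ) (μ ν : Measure (Ed d)) : ℝ :=
  sInf ((fun π => topEigSum k (Vpi π) (Vpi_isHermitian π)) '' couplings μ ν)

/-! ### Auxiliary lemmas -/

lemma coord_abs_le_norm {d : ℕ} (x : Ed d) (i : Fin d) : |x i| ≤ ‖x‖ := by
  rw [← Real.sqrt_sq_eq_abs, EuclideanSpace.norm_eq]
  apply Real.sqrt_le_sqrt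
  have := Finset.single_le_sum (f := fun j => ‖x j‖ ^ 2) (fun j _ => by positivity)
    (Finset.mem_univ i)
  simpa [sq_abs, Real.norm_eq_abs] using this

lemma integrable_normsq_fst {d : ℕ} {μ ν : Measure (Ed d)} {π : Measure (Ed d × Ed d)}
    (hπ : π ∈ couplings μ ν) (hμ : Integrable (fun x => ‖x‖ ^ 2) μ) :
    Integrable (fun p : Ed d × Ed d => ‖p.1‖ ^ 2) π := by
  have h := hμ
  rw [← hπ.2.1] at h
  exact (integrable_map_measure
    (Continuous.aestronglyMeasurable (by continuity))
    measurable_fst.aemeasurable).mp h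

lemma integrable_normsq_snd {d : ℕ} {μ ν : Measure (Ed d)} {π : Measure (Ed d × Ed d)}
    (hπ : π ∈ couplings μ ν) (hν : Integrable (fun x => ‖x‖ ^ 2) ν) :
    Integrable (fun p : Ed d × Ed d => ‖p.2‖ ^ 2) π := by
  have h := hν
  rw [← hπ.2.2] at h
  exact (integrable_map_measure
    (Continuous.aestronglyMeasurable (by continuity))
    measurable_snd.aemeasurable).mp h

lemma integrable_normsq_sub {d : ℕ} {μ ν : Measure (Ed d)} {π : Measure (Ed d × Ed d)}
    (hπ : π ∈ couplings μ ν) (hμ : Integrable (fun x => ‖x‖ ^ 2) μ)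
    (hν : Integrable (fun x => ‖x‖ ^ 2) ν) :
    Integrable (fun p : Ed d × Ed d => ‖p.1 - p.2‖ ^ 2) π := by
  have h1 := integrable_normsq_fst hπ hμ
  have h2 := integrable_normsq_snd hπ hν
  refine Integrable.mono' ((h1.const_mul 2).add (h2.const_mul 2))
    (Continuous.aestronglyMeasurable (by continuity)) ?_
  filter_upwards with p
  have hs : ‖p.1 - p.2‖ ≤ ‖p.1‖ + ‖p.2‖ := norm_sub_le _ _
  have h0 : (0:ℝ) ≤ ‖p.1 - p.2‖ := norm_nonneg _
  simp only [Pi.add_apply, Real.norm_eq_abs, abs_of_nonneg (sq_nonneg ‖p.1 - p.2‖)]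
  nlinarith [sq_nonneg (‖p.1‖ - ‖p.2‖), pow_le_pow_left₀ h0 hs 2]

lemma integrable_entry {d : ℕ} {μ ν : Measure (Ed d)} {π : Measure (Ed d × Ed d)}
    (hπ : π ∈ couplings μ ν) (hμ : Integrable (fun x => ‖x‖ ^ 2) μ)
    (hν : Integrable (fun x => ‖x‖ ^ 2) ν) (i j : Fin d) :
    Integrable (fun p : Ed d × Ed d => (p.1 i - p.2 i) * (p.1 j - p.2 j)) π := by
  refine Integrable.mono' (integrable_normsq_sub hπ hμ hν)
    ((by fun_prop : Measurable fun p : Ed d × Ed d =>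
      (p.1 i - p.2 i) * (p.1 j - p.2 j)).aestronglyMeasurable) ?_
  filter_upwards with p
  have hi : |p.1 i - p.2 i| ≤ ‖p.1 - p.2‖ := by
    have := coord_abs_le_norm (p.1 - p.2) i
    simpa using this
  have hj : |p.1 j - p.2 j| ≤ ‖p.1 - p.2‖ := by
    have := coord_abs_le_norm (p.1 - p.2) j
    simpa using this
  rw [Real.norm_eq_abs, abs_mul]
  calc |p.1 i - p.2 i| * |p.1 j - p.2 j| ≤ ‖p.1 - p.2‖ * ‖p.1 - p.2‖ :=
        mul_le_mul hi hj (abs_nonneg _) (norm_nonneg _)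
    _ = ‖p.1 - p.2‖ ^ 2 := (sq _).symm

lemma vpi_posSemidef {d : ℕ} {μ ν : Measure (Ed d)} {π : Measure (Ed d × Ed d)}
    (hπ : π ∈ couplings μ ν) (hμ : Integrable (fun x => ‖x‖ ^ 2) μ)
    (hν : Integrable (fun x => ‖x‖ ^ 2) ν) : (Vpi π).PosSemidef := by
  refine Matrix.PosSemidef.of_dotProduct_mulVec_nonneg (Vpi_isHermitian π) fun x => ?_
  have key : dotProduct (star x) (Vpi π *ᵥ x)
      = ∫ p, (∑ i, x i * (p.1 i - p.2 i)) ^ 2 ∂π := by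
    have hterm : ∀ i j : Fin d, x i * ((∫ p, (p.1 i - p.2 i) * (p.1 j - p.2 j) ∂π) * x j)
        = ∫ p, (x i * (p.1 i - p.2 i)) * (x j * (p.1 j - p.2 j)) ∂π := by
      intro i j
      rw [← integral_mul_const, ← integral_const_mul]
      congr 1; funext p; ring
    simp only [dotProduct, mulVec, dotProduct, star_trivial, Vpi, Matrix.of_apply,
      Finset.mul_sum]
    calc ∑ i, ∑ j, x i * ((∫ p, (p.1 i - p.2 i) * (p.1 j - p.2 j) ∂π) * x j)
        = ∑ i, ∑ j, ∫ p, (x i * (p.1 i - p.2 i)) * (x j * (p.1 j - p.2 j)) ∂π := by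
          refine Finset.sum_congr rfl fun i _ => Finset.sum_congr rfl fun j _ => hterm i j
      _ = ∫ p, ∑ i, ∑ j, (x i * (p.1 i - p.2 i)) * (x j * (p.1 j - p.2 j)) ∂π := by
          rw [integral_finset_sum]
          · exact Finset.sum_congr rfl fun i _ => (integral_finset_sum _
              fun j _ => ((integrable_entry hπ hμ hν i j).const_mul (x i)).mul_const (x j)
                |>.congr (by filter_upwards with p; ring)).symm
          · intro i _
            refine Integrable.congr (f := fun p =>
              ∑ j, (x i * (p.1 i - p.2 i)) * (x j * (p.1 j - p.2 j))) ?_ ?_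
            · exact integrable_finset_sum _ fun j _ =>
                ((integrable_entry hπ hμ hν i j).const_mul (x i)).mul_const (x j)
                  |>.congr (by filter_upwards with p; ring)
            · filter_upwards with p; rfl
      _ = ∫ p, (∑ i, x i * (p.1 i - p.2 i)) ^ 2 ∂π := by
          congr 1; ext p
          rw [sq, Finset.sum_mul_sum]
  rw [key]
  exact integral_nonneg fun p => sq_nonneg _

lemma eigDesc_nonneg {d : ℕ} {μ ν : Measure (Ed d)} {π : Measure (Ed d × Ed d)}
    (hπ : π ∈ couplings μ ν) (hμ : Integrable (fun x => ‖x‖ ^ 2) μ)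
    (hν : Integrable (fun x => ‖x‖ ^ 2) ν) (i : Fin d) :
    0 ≤ eigDesc (Vpi π) (Vpi_isHermitian π) i :=
  (vpi_posSemidef hπ hμ hν).eigenvalues_nonneg _

lemma eigDesc_antitone {d : ℕ} (V : Matrix (Fin d) (Fin d) ℝ) (h : V.IsHermitian) :
    Antitone (eigDesc V h) := fun i j hij =>
  Tuple.monotone_sort h.eigenvalues (Fin.rev_le_rev.mpr hij)

lemma topEigSum_succ {d : ℕ} (k : ℕ) (hk : k < d) (V : Matrix (Fin d) (Fin d) ℝ)
    (h : V.IsHermitian) :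
    topEigSum (k + 1) V h = topEigSum k V h + eigDesc V h ⟨k, hk⟩ := by
  unfold topEigSum
  have hset : Finset.univ.filter (fun i : Fin d => (i : ℕ) < k + 1)
      = insert ⟨k, hk⟩ (Finset.univ.filter (fun i : Fin d => (i : ℕ) < k)) := by
    ext i
    simp only [Finset.mem_filter, Finset.mem_univ, true_and, Finset.mem_insert, Fin.ext_iff]
    omega
  rw [hset, Finset.sum_insert (by simp)]
  ring

lemma prod_mem_couplings {d : ℕ} (μ ν : Measure (Ed d)) [IsProbabilityMeasure μ]
    [IsProbabilityMeasure ν] : μ.prod ν ∈ couplings μ ν := by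
  refine ⟨inferInstance, ?_, ?_⟩
  · simp [Measure.map_fst_prod]
  · simp [Measure.map_snd_prod]

/-- `k ↦ S_k²(μ,ν)` is nondecreasing and concave. -/
theorem SRWsq_mono_concave {d : ℕ}
    (μ ν : Measure (Ed d)) [IsProbabilityMeasure μ] [IsProbabilityMeasure ν]
    (hμ : Integrable (fun x => ‖x‖ ^ 2) μ) (hν : Integrable (fun x => ‖x‖ ^ 2) ν) :
    (∀ k : ℕ, 1 ≤ k → k ≤ d - 1 → SRWsq k μ ν ≤ SRWsq (k+1) μ ν) ∧
      (∀ k : ℕ, 1 ≤ k → k ≤ d - 2 →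
        SRWsq (k+2) μ ν - SRWsq (k+1) μ ν ≤ SRWsq (k+1) μ ν - SRWsq k μ ν) := by
  set F : ℕ → Measure (Ed d × Ed d) → ℝ :=
    fun k π => topEigSum k (Vpi π) (Vpi_isHermitian π) with hF
  have hFnonneg : ∀ k, ∀ π ∈ couplings μ ν, 0 ≤ F k π := by
    intro k π hπ
    exact Finset.sum_nonneg fun i _ => eigDesc_nonneg hπ hμ hν i
  have hne : ∀ k, (F k '' couplings μ ν).Nonempty :=
    fun k => ⟨_, Set.mem_image_of_mem _ (prod_mem_couplings μ ν)⟩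
  have hbdd : ∀ k, BddBelow (F k '' couplings μ ν) := by
    intro k
    exact ⟨0, fun b ⟨π, hπ, hb⟩ => hb ▸ hFnonneg k π hπ⟩
  have hSle : ∀ k, ∀ π ∈ couplings μ ν, SRWsq k μ ν ≤ F k π :=
    fun k π hπ => csInf_le (hbdd k) (Set.mem_image_of_mem _ hπ)
  have hFmono : ∀ k, ∀ π ∈ couplings μ ν, F k π ≤ F (k + 1) π := by
    intro k π hπ
    refine Finset.sum_le_sum_of_subset_of_nonneg ?_ ?_
    · intro i hi
      simp only [Finset.mem_filter, Finset.mem_univ, true_and] at hi ⊢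
      omega
    · intro i _ _
      exact eigDesc_nonneg hπ hμ hν i
  constructor
  · intro k _ _
    refine le_csInf (hne (k + 1)) ?_
    rintro b ⟨π, hπ, rfl⟩
    exact (hSle k π hπ).trans (hFmono k π hπ)
  · intro k hk1 hk2
    have hkd : k + 1 < d := by omega
    have hkd' : k < d := by omega
    have key : SRWsq (k+2) μ ν + SRWsq k μ ν ≤ 2 * SRWsq (k+1) μ ν := by
      have h2 : (SRWsq (k+2) μ ν + SRWsq k μ ν) / 2 ≤ SRWsq (k+1) μ ν := by
        refine le_csInf (hne (k + 1)) ?_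
        rintro b ⟨π, hπ, rfl⟩
        have e1 : F (k + 1) π = F k π + eigDesc (Vpi π) (Vpi_isHermitian π) ⟨k, hkd'⟩ :=
          topEigSum_succ k hkd' _ _
        have e2 : F (k + 2) π = F (k + 1) π + eigDesc (Vpi π) (Vpi_isHermitian π) ⟨k+1, hkd⟩ :=
          topEigSum_succ (k + 1) hkd _ _
        have hanti : eigDesc (Vpi π) (Vpi_isHermitian π) ⟨k+1, hkd⟩
            ≤ eigDesc (Vpi π) (Vpi_isHermitian π) ⟨k, hkd'⟩ :=
          eigDesc_antitone _ _ (by simp [Fin.le_def])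
        have h3 := hSle (k + 2) π hπ
        have h4 := hSle k π hπ
        linarith
      linarith
    linarith
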